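/- arXiv:2107.08423 — 4 statements merged into one kernel-verified Lean document; each statement's English description precedes it below -/
import Mathlib

section
/- Let k ≥ 2 and 0 ≤ m ≤ ⌊(k−1)/2⌋, and let r be the fixed point of the binomial CDF w_{k,m}(p) = Σ_{i=0}^{m} C(k,i) p^i (1−p)^{k−i}, i.e., w_{k,m}(r) = r with r ∈ (0,1). If r > m/(k−1), then r ≤ (m+1)·C(k,m)·r^m (1−r)^{k−m}. -/
/-- The binomial CDF: probability that `Bin(k,p) ≤ m`. -/
noncomputable def binCdf (k m : ℕ) (p : ℝ) : ℝ :=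
  ∑ i ∈ Finset.range (m + 1), (k.choose i : ℝ) * p ^ i * (1 - p) ^ (k - i)

/-- bound on the fixed point of the binomial CDF when it exceeds m/(k-1). -/
theorem binCdf_fixed_point_bound (k m : ℕ) (hk : 2 ≤ k) (hm : m ≤ (k - 1) / 2)
    (r : ℝ) (hr : r ∈ Set.Ioo (0:ℝ) 1) (hfix : binCdf k m r = r)
    (hgt : (m : ℝ) / ((k : ℝ) - 1) < r) :
    r ≤ ((m : ℝ) + 1) * (k.choose m : ℝ) * r ^ m * (1 - r) ^ (k - m) := by
  obtain ⟨hr0, hr1⟩ := hr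
  have hmk : 2 * m ≤ k - 1 := by omega
  have hmltk : m < k := by omega
  set a : ℕ → ℝ := fun i => (k.choose i : ℝ) * r ^ i * (1 - r) ^ (k - i) with ha
  have hk1 : (1:ℝ) < (k:ℝ) := by exact_mod_cast by omega
  have hkr : (m : ℝ) < ((k:ℝ) - 1) * r := by
    rw [div_lt_iff₀ (by linarith)] at hgt; linarith
  -- step: a j ≤ a (j+1) for j+1 ≤ m
  have step : ∀ j, j + 1 ≤ m → a j ≤ a (j + 1) := by
    intro j hj
    have hjk : j + 1 < k := by omega
    have hsub : k - j = (k - (j + 1)) + 1 := by omega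
    have hchoose : (k.choose (j+1) : ℝ) * (j + 1) = (k.choose j : ℝ) * ((k:ℝ) - j) := by
      have h := Nat.choose_succ_right_eq k j
      have h2 : ((k.choose (j+1) * (j+1) : ℕ) : ℝ) = ((k.choose j * (k - j) : ℕ) : ℝ) := by
        exact_mod_cast congrArg (Nat.cast (R := ℝ)) h
      push_cast [Nat.cast_sub (by omega : j ≤ k)] at h2
      linarith
    have hcj : (0:ℝ) < (k.choose j : ℝ) := by
      exact_mod_cast Nat.choose_pos (by omega : j ≤ k)
    -- key scalar inequality : C(k,j) * (1-r) ≤ C(k,j+1) * r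
    have hkey : (k.choose j : ℝ) * (1 - r) ≤ (k.choose (j+1) : ℝ) * r := by
      have hj1 : (j:ℝ) + 1 ≤ (m:ℝ) := by exact_mod_cast hj
      have h1 : ((j:ℝ) + 1) * (1 - r) ≤ ((k:ℝ) - j) * r := by nlinarith
      have hjpos : (0:ℝ) < (j:ℝ) + 1 := by positivity
      rw [← mul_le_mul_iff_of_pos_right hjpos]
      calc (k.choose j : ℝ) * (1 - r) * ((j:ℝ) + 1)
          ≤ ((k.choose j : ℝ) * ((k:ℝ) - j)) * r := by nlinarith
        _ = ((k.choose (j+1) : ℝ) * ((j:ℝ) + 1)) * r := by rw [hchoose]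
        _ = (k.choose (j+1) : ℝ) * r * ((j:ℝ) + 1) := by ring
    have hpow : (0:ℝ) ≤ r ^ j * (1 - r) ^ (k - (j+1)) :=
      mul_nonneg (pow_nonneg hr0.le _) (pow_nonneg (by linarith) _)
    simp only [ha, hsub]
    calc (k.choose j : ℝ) * r ^ j * (1 - r) ^ (k - (j+1) + 1)
        = ((k.choose j : ℝ) * (1 - r)) * (r ^ j * (1 - r) ^ (k - (j+1))) := by ring
      _ ≤ ((k.choose (j+1) : ℝ) * r) * (r ^ j * (1 - r) ^ (k - (j+1))) := by
          exact mul_le_mul_of_nonneg_right hkey hpow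
      _ = (k.choose (j+1) : ℝ) * r ^ (j+1) * (1 - r) ^ (k - (j+1)) := by ring
  have chain : ∀ d i, i + d ≤ m → a i ≤ a (i + d) := by
    intro d
    induction d with
    | zero => intro i _; simp
    | succ n ih =>
      intro i h
      calc a i ≤ a (i + n) := ih i (by omega)
        _ ≤ a (i + n + 1) := step _ (by omega)
        _ = a (i + (n + 1)) := by ring_nf
  have hle : ∀ i ∈ Finset.range (m + 1), a i ≤ a m := by
    intro i hi
    have hi' : i ≤ m := by simpa [Nat.lt_succ_iff] using hi
    have := chain (m - i) i (by omega)
    rwa [show i + (m - i) = m by omega] at this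
  have hsum : binCdf k m r ≤ (m + 1) * a m := by
    have := Finset.sum_le_card_nsmul (Finset.range (m+1)) a (a m) hle
    simpa [binCdf, ha, Finset.card_range, nsmul_eq_mul, Nat.cast_add, Nat.cast_one] using this
  calc r = binCdf k m r := hfix.symm
    _ ≤ (m + 1) * a m := hsum
    _ = ((m : ℝ) + 1) * (k.choose m : ℝ) * r ^ m * (1 - r) ^ (k - m) := by
        simp only [ha]; ring
end

section
/- For every integer k ≥ 2 and every integer m with 0 ≤ m ≤ k−1, the unique fixed point r ∈ (0,1) of the binomial CDF w_{k,m}(p) = P(X_k(p) ≤ m) satisfies |w_{k,m}'(r)| > 1, where w_{k,m}'(p) = −k·C(k−1,m)·p^m(1−p)^{k−m−1}. -/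
private lemma natBound (k : ℕ) : ∀ (j s : ℕ), j ≤ s → s ≤ k →
    k.choose (s - j) * (k - s + 1) ^ j ≤ k.choose s * s ^ j := by
  intro j
  induction j with
  | zero => intro s _ _; simp
  | succ j ih =>
    intro s hj hs
    have hj' : j ≤ s := by omega
    have e : s - j = (s - j - 1) + 1 := by omega
    have key := Nat.choose_succ_right_eq k (s - j - 1)
    rw [← e] at key
    calc k.choose (s - (j+1)) * (k - s + 1) ^ (j+1)
        = (k.choose (s - j - 1) * (k - s + 1)) * (k - s + 1) ^ j := by
          rw [Nat.sub_sub, pow_succ]; ring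
      _ ≤ (k.choose (s - j - 1) * (k - (s - j - 1))) * (k - s + 1) ^ j := by
          have : k - s + 1 ≤ k - (s - j - 1) := by omega
          exact Nat.mul_le_mul_right _ (Nat.mul_le_mul_left _ this)
      _ = (k.choose (s - j) * (k - s + 1) ^ j) * (s - j) := by rw [← key]; ring
      _ ≤ (k.choose s * s ^ j) * s := Nat.mul_le_mul (ih s hj' hs) (by omega)
      _ = k.choose s * s ^ (j+1) := by rw [pow_succ]; ring

private lemma sumL_le (k m b : ℕ) (hkb : k = m + 1 + b) (r q : ℝ) (hr0 : 0 < r) (hq0 : 0 < q) :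
    ∑ i ∈ Finset.range (m+1), (k.choose i : ℝ) * r^i * q^(k-i)
      ≤ ((k.choose m : ℝ) * r^m * q^(k-m)) *
          ∑ j ∈ Finset.range (m+1), ((m:ℝ)*q/(((b:ℝ)+2)*r))^j := by
  rw [← Finset.sum_range_reflect, Finset.mul_sum]
  apply Finset.sum_le_sum
  intro j hj
  have hj' : j ≤ m := by simpa [Nat.lt_succ_iff] using Finset.mem_range.mp hj
  have em : m + 1 - 1 - j = m - j := by omega
  rw [em]
  have key : (k.choose (m-j) : ℝ) * ((b:ℝ)+2)^j ≤ (k.choose m : ℝ) * (m:ℝ)^j := by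
    have hn := natBound k j m hj' (by omega)
    have e : k - m + 1 = b + 2 := by omega
    rw [e] at hn
    exact_mod_cast hn
  have hd : (0:ℝ) < (((b:ℝ)+2)*r)^j := by positivity
  rw [div_pow, mul_div_assoc', le_div_iff₀ hd]
  have er : r^(m-j) * r^j = r^m := by rw [← pow_add]; congr 1; omega
  have eq2 : q^(k-(m-j)) = q^(k-m) * q^j := by rw [← pow_add]; congr 1; omega
  calc ((k.choose (m-j) : ℝ) * r^(m-j) * q^(k-(m-j))) * (((b:ℝ)+2)*r)^j
      = ((k.choose (m-j) : ℝ) * ((b:ℝ)+2)^j) * (r^(m-j) * r^j * (q^(k-m) * q^j)) := by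
        rw [mul_pow, eq2]; ring
    _ ≤ ((k.choose m : ℝ) * (m:ℝ)^j) * (r^(m-j) * r^j * (q^(k-m) * q^j)) := by
        apply mul_le_mul_of_nonneg_right key (by positivity)
    _ = (k.choose m : ℝ) * r^m * q^(k-m) * ((m:ℝ)*q)^j := by rw [mul_pow, ← er]; ring

private lemma sumR_le (k m b : ℕ) (hkb : k = m + 1 + b) (r q : ℝ) (hr0 : 0 < r) (hq0 : 0 < q) :
    ∑ i ∈ Finset.Ico (m+1) (k+1), (k.choose i : ℝ) * r^i * q^(k-i)
      ≤ ((k.choose (m+1) : ℝ) * r^(m+1) * q^b) *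
          ∑ j ∈ Finset.range (b+1), ((b:ℝ)*r/(((m:ℝ)+2)*q))^j := by
  rw [Finset.sum_Ico_eq_sum_range]
  have ebb : k + 1 - (m+1) = b + 1 := by omega
  rw [ebb, Finset.mul_sum]
  apply Finset.sum_le_sum
  intro j hj
  have hj' : j ≤ b := by simpa [Nat.lt_succ_iff] using Finset.mem_range.mp hj
  have key : (k.choose (m+1+j) : ℝ) * ((m:ℝ)+2)^j ≤ (k.choose (m+1) : ℝ) * (b:ℝ)^j := by
    have hn := natBound k j b hj' (by omega)
    have e1 : k - b + 1 = m + 2 := by omega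
    have e2 : k.choose (b - j) = k.choose (m+1+j) := by
      have e : b - j = k - (m+1+j) := by omega
      rw [e, Nat.choose_symm (by omega)]
    have e3 : k.choose b = k.choose (m+1) := by
      have e : b = k - (m+1) := by omega
      rw [e, Nat.choose_symm (by omega)]
    rw [e1, e2, e3] at hn
    exact_mod_cast hn
  have hd : (0:ℝ) < (((m:ℝ)+2)*q)^j := by positivity
  rw [div_pow, mul_div_assoc', le_div_iff₀ hd]
  have er : r^(m+1) * r^j = r^(m+1+j) := by rw [← pow_add]
  have eq2 : q^(k-(m+1+j)) * q^j = q^b := by rw [← pow_add]; congr 1; omega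
  calc ((k.choose (m+1+j) : ℝ) * r^(m+1+j) * q^(k-(m+1+j))) * (((m:ℝ)+2)*q)^j
      = ((k.choose (m+1+j) : ℝ) * ((m:ℝ)+2)^j) * (r^(m+1+j) * (q^(k-(m+1+j)) * q^j)) := by
        rw [mul_pow]; ring
    _ ≤ ((k.choose (m+1) : ℝ) * (b:ℝ)^j) * (r^(m+1+j) * (q^(k-(m+1+j)) * q^j)) := by
        apply mul_le_mul_of_nonneg_right key (by positivity)
    _ = (k.choose (m+1) : ℝ) * r^(m+1) * q^b * ((b:ℝ)*r)^j := by
        rw [mul_pow, ← er, eq2]; ring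

private lemma hasDerivAt_term (c : ℝ) (i j : ℕ) (p : ℝ) :
    HasDerivAt (fun p : ℝ => c * p ^ i * (1 - p) ^ j)
      (c * ((i:ℝ) * p ^ (i-1) * (1-p)^j) - c * (p^i * ((j:ℝ) * (1-p)^(j-1)))) p := by
  have h1 : HasDerivAt (fun p : ℝ => p ^ i) ((i:ℝ) * p^(i-1)) p := hasDerivAt_pow i p
  have hin : HasDerivAt (fun p : ℝ => 1 - p) (-1) p := by
    exact (hasDerivAt_id p).const_sub 1
  have h2 : HasDerivAt (fun p : ℝ => (1 - p) ^ j) ((j:ℝ) * (1-p)^(j-1) * (-1)) p := by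
    have := (hasDerivAt_pow j (1-p)).comp p hin
    exact this
  have h3 := (h1.mul h2).const_mul c
  have hfe : (fun p : ℝ => c * (p ^ i * (1 - p) ^ j)) = (fun p : ℝ => c * p ^ i * (1 - p) ^ j) := by
    funext p; ring
  simp only [Pi.mul_apply] at h3
  rw [hfe] at h3
  refine h3.congr_deriv ?_
  ring

private lemma hasDerivAt_binCdf (k : ℕ) (hk : 1 ≤ k) :
    ∀ m, m ≤ k - 1 → ∀ p : ℝ, HasDerivAt (binCdf k m)
      (-(k : ℝ) * ((k - 1).choose m : ℝ) * p ^ m * (1 - p) ^ (k - m - 1)) p := by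
  intro m
  induction m with
  | zero =>
    intro _ p
    have hfun : binCdf k 0 = fun p : ℝ => (k.choose 0 : ℝ) * p ^ 0 * (1 - p) ^ (k - 0) := by
      funext p; simp [binCdf]
    rw [hfun]
    have h := hasDerivAt_term (k.choose 0 : ℝ) 0 (k - 0) p
    convert h using 1
    simp
  | succ m ih =>
    intro hm p
    have hm' : m ≤ k - 1 := by omega
    have ek : (k-1).succ = k := by omega
    have hfun : binCdf k (m+1) = fun p : ℝ =>
        binCdf k m p + (k.choose (m+1) : ℝ) * p ^ (m+1) * (1 - p) ^ (k - (m+1)) := by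
      funext p; simp [binCdf, Finset.sum_range_succ]
    rw [hfun]
    have h := (ih hm' p).add (hasDerivAt_term (k.choose (m+1) : ℝ) (m+1) (k - (m+1)) p)
    refine h.congr_deriv ?_
    symm
    have idA : k * (k-1).choose m = k.choose (m+1) * (m+1) := by
      have h := Nat.add_one_mul_choose_eq (k-1) m
      rw [show k - 1 + 1 = k by omega] at h
      simpa using h
    have idC : k * (k-1).choose (m+1) = k.choose (m+1) * (k - (m+1)) := by
      have h1 := Nat.add_one_mul_choose_eq (k-1) (m+1)
      rw [show k - 1 + 1 = k by omega] at h1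
      have h2 := Nat.choose_succ_right_eq k (m+1)
      simpa using h1.trans (by simpa using h2)
    have idAr : (k:ℝ) * ((k-1).choose m : ℝ) = (k.choose (m+1) : ℝ) * ((m:ℝ)+1) := by
      exact_mod_cast congrArg (Nat.cast : ℕ → ℝ) idA
    have idCr : (k:ℝ) * ((k-1).choose (m+1) : ℝ) = (k.choose (m+1) : ℝ) * (((k - (m+1) : ℕ)):ℝ) := by
      exact_mod_cast congrArg (Nat.cast : ℕ → ℝ) idC
    have e1 : k - m - 1 = (k - m - 2) + 1 := by omega
    have e3 : k - (m+1) - 1 = k - m - 2 := by omega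
    have e5 : (m+1) - 1 = m := by omega
    have ecast : (((k - (m+1) : ℕ)):ℝ) = ((k:ℝ) - m) - 1 := by
      have e : (k - (m+1) : ℕ) = k - m - 1 := by omega
      rw [e]
      push_cast [Nat.cast_sub (by omega : 1 ≤ k - m), Nat.cast_sub (by omega : m ≤ k)]
      ring
    rw [ecast] at idCr
    have e2 : k - (m+1) = (k - m - 2) + 1 := by omega
    rw [e3, e5, e2, e1, pow_succ, pow_succ]
    push_cast
    have ec2 : ((k - m - 2 : ℕ) : ℝ) = (k:ℝ) - (m:ℝ) - 2 := by
      rw [Nat.sub_sub, Nat.cast_sub (by omega : m + 2 ≤ k)]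
      push_cast; ring
    rw [ec2]
    linear_combination (p^m * (1-p) * (1-p)^(k-m-2)) * idAr - (p^(m+1) * (1-p)^(k-m-2)) * idCr

set_option maxHeartbeats 1600000 in
/-- at the unique interior fixed point of the binomial CDF, the absolute
value of its derivative `-k·C(k-1,m)·p^m(1-p)^{k-m-1}` exceeds 1. -/
theorem binCdf_derivative_at_fixed_point (k m : ℕ) (hk : 2 ≤ k) (hm : m ≤ k - 1)
    (r : ℝ) (hr : r ∈ Set.Ioo (0:ℝ) 1) (hfix : binCdf k m r = r) :
    deriv (binCdf k m) r = -(k : ℝ) * ((k - 1).choose m : ℝ) * r ^ m * (1 - r) ^ (k - m - 1) ∧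
    1 < |deriv (binCdf k m) r| := by
  obtain ⟨hr0, hr1⟩ := hr
  have hderiv : deriv (binCdf k m) r
      = -(k : ℝ) * ((k - 1).choose m : ℝ) * r ^ m * (1 - r) ^ (k - m - 1) :=
    (hasDerivAt_binCdf k (by omega) m hm r).deriv
  refine ⟨hderiv, ?_⟩
  rw [hderiv]
  obtain ⟨q, hqdef⟩ : ∃ q : ℝ, q = 1 - r := ⟨_, rfl⟩
  obtain ⟨b, hbdef⟩ : ∃ b : ℕ, b = k - m - 1 := ⟨_, rfl⟩
  have hq0 : 0 < q := by rw [hqdef]; linarith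
  have hkb : k = m + 1 + b := by omega
  rw [← hqdef, ← hbdef]
  -- positivity of the coefficient
  have hch : 0 < ((k-1).choose m : ℝ) := by exact_mod_cast Nat.choose_pos hm
  have hk0 : (0:ℝ) < (k:ℝ) := by exact_mod_cast (by omega : 0 < k)
  have habs : |-(k : ℝ) * ((k - 1).choose m : ℝ) * r ^ m * q ^ b|
      = ((k:ℝ) * ((k-1).choose m : ℝ)) * (r^m * q^b) := by
    rw [show -(k : ℝ) * ((k - 1).choose m : ℝ) * r ^ m * q ^ b
        = -(((k:ℝ) * ((k-1).choose m : ℝ)) * (r^m * q^b)) by ring, abs_neg,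
      abs_of_pos (by positivity)]
  rw [habs]
  by_contra hcon
  push_neg at hcon
  -- fixed point equation in terms of q
  have H1 : ∑ i ∈ Finset.range (m+1), (k.choose i : ℝ) * r^i * q^(k-i) = r := by
    have h := hfix
    simp only [binCdf] at h
    rw [hqdef]
    exact h
  have htot : ∑ i ∈ Finset.range (k+1), (k.choose i : ℝ) * r^i * q^(k-i) = 1 := by
    have h := add_pow r q k
    rw [show r + q = 1 by rw [hqdef]; ring, one_pow] at h
    rw [show ∑ i ∈ Finset.range (k+1), (k.choose i:ℝ)*r^i*q^(k-i)
        = ∑ i ∈ Finset.range (k+1), r^i*q^(k-i)*(k.choose i:ℝ) from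
      Finset.sum_congr rfl (fun i _ => by ring)]
    exact h.symm
  have H2 : ∑ i ∈ Finset.Ico (m+1) (k+1), (k.choose i : ℝ) * r^i * q^(k-i) = q := by
    have hs := Finset.sum_range_add_sum_Ico
      (fun i => (k.choose i : ℝ) * r^i * q^(k-i)) (show m+1 ≤ k+1 by omega)
    rw [H1, htot] at hs
    have hs' : r + ∑ i ∈ Finset.Ico (m+1) (k+1), (k.choose i : ℝ) * r^i * q^(k-i) = 1 := by
      simpa using hs
    linarith
  -- binomial coefficient identities
  have hchm : 0 < (k.choose m : ℝ) := by exact_mod_cast Nat.choose_pos (by omega : m ≤ k)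
  have hchm1 : 0 < (k.choose (m+1) : ℝ) := by exact_mod_cast Nat.choose_pos (by omega : m+1 ≤ k)
  have idA : k * (k-1).choose m = k.choose (m+1) * (m+1) := by
    have h := Nat.add_one_mul_choose_eq (k-1) m
    rw [show k - 1 + 1 = k by omega] at h
    simpa using h
  have idAB : k * (k-1).choose m = k.choose m * (b+1) := by
    rw [idA, Nat.choose_succ_right_eq]
    congr 1
    omega
  have hKA : (k:ℝ) * ((k-1).choose m : ℝ) = ((m:ℝ)+1) * (k.choose (m+1) : ℝ) := by
    have := congrArg (Nat.cast : ℕ → ℝ) idA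
    push_cast at this
    linarith
  have hKB : (k:ℝ) * ((k-1).choose m : ℝ) = ((b:ℝ)+1) * (k.choose m : ℝ) := by
    have := congrArg (Nat.cast : ℕ → ℝ) idAB
    push_cast at this
    linarith
  have ekm : k - m = b + 1 := by omega
  -- STEP 3 : (b+1)(b+2) r ≤ (b+2 + m(b+1)) q
  have step3 : ((b:ℝ)+1)*((b:ℝ)+2)*r ≤ (((b:ℝ)+2) + (m:ℝ)*((b:ℝ)+1))*q := by
    have hLchain : (((k:ℝ) * ((k-1).choose m : ℝ)) * (r^m * q^b)) * r
        ≤ ((k.choose m : ℝ) * r^m * q^(k-m)) *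
            ∑ j ∈ Finset.range (m+1), ((m:ℝ)*q/(((b:ℝ)+2)*r))^j := by
      calc (((k:ℝ) * ((k-1).choose m : ℝ)) * (r^m * q^b)) * r ≤ 1 * r :=
            mul_le_mul_of_nonneg_right hcon hr0.le
        _ = r := one_mul r
        _ = ∑ i ∈ Finset.range (m+1), (k.choose i : ℝ) * r^i * q^(k-i) := H1.symm
        _ ≤ _ := sumL_le k m b hkb r q hr0 hq0
    rcases lt_or_ge ((m:ℝ)*q/(((b:ℝ)+2)*r)) 1 with hphi | hphi
    · have hG1 : (∑ j ∈ Finset.range (m+1), ((m:ℝ)*q/(((b:ℝ)+2)*r))^j)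
          * (1 - (m:ℝ)*q/(((b:ℝ)+2)*r)) ≤ 1 := by
        have hgm := geom_sum_mul ((m:ℝ)*q/(((b:ℝ)+2)*r)) (m+1)
        have hp : (0:ℝ) ≤ ((m:ℝ)*q/(((b:ℝ)+2)*r))^(m+1) := by positivity
        nlinarith [hgm]
      have h1phi : (0:ℝ) ≤ 1 - (m:ℝ)*q/(((b:ℝ)+2)*r) := by linarith
      have hmul := mul_le_mul_of_nonneg_right hLchain h1phi
      have hCq : (0:ℝ) ≤ (k.choose m : ℝ) * r^m * q^(k-m) := by positivity
      have hmul2 : (((k:ℝ) * ((k-1).choose m : ℝ)) * (r^m * q^b)) * r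
            * (1 - (m:ℝ)*q/(((b:ℝ)+2)*r))
          ≤ (k.choose m : ℝ) * r^m * q^(k-m) := by
        calc (((k:ℝ) * ((k-1).choose m : ℝ)) * (r^m * q^b)) * r
              * (1 - (m:ℝ)*q/(((b:ℝ)+2)*r))
            ≤ ((k.choose m : ℝ) * r^m * q^(k-m)) *
                (∑ j ∈ Finset.range (m+1), ((m:ℝ)*q/(((b:ℝ)+2)*r))^j) *
                (1 - (m:ℝ)*q/(((b:ℝ)+2)*r)) := hmul
          _ = ((k.choose m : ℝ) * r^m * q^(k-m)) *
                ((∑ j ∈ Finset.range (m+1), ((m:ℝ)*q/(((b:ℝ)+2)*r))^j) *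
                (1 - (m:ℝ)*q/(((b:ℝ)+2)*r))) := by ring
          _ ≤ ((k.choose m : ℝ) * r^m * q^(k-m)) * 1 :=
              mul_le_mul_of_nonneg_left hG1 hCq
          _ = (k.choose m : ℝ) * r^m * q^(k-m) := mul_one _
      rw [ekm, pow_succ, hKB] at hmul2
      -- cancel (k.choose m) * (r^m * q^b)
      have hposC : (0:ℝ) < (k.choose m : ℝ) * (r^m * q^b) := by positivity
      have hfin : ((b:ℝ)+1)*r*(1 - (m:ℝ)*q/(((b:ℝ)+2)*r)) ≤ q := by
        have h' : (((b:ℝ)+1)*r*(1 - (m:ℝ)*q/(((b:ℝ)+2)*r))) * ((k.choose m : ℝ) * (r^m * q^b))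
            ≤ q * ((k.choose m : ℝ) * (r^m * q^b)) := by
          calc (((b:ℝ)+1)*r*(1 - (m:ℝ)*q/(((b:ℝ)+2)*r))) * ((k.choose m : ℝ) * (r^m * q^b))
              = ((b:ℝ)+1) * (k.choose m : ℝ) * (r^m * q^b) * r
                  * (1 - (m:ℝ)*q/(((b:ℝ)+2)*r)) := by ring
            _ ≤ (k.choose m : ℝ) * r^m * (q^b * q) := hmul2
            _ = q * ((k.choose m : ℝ) * (r^m * q^b)) := by ring
        exact le_of_mul_le_mul_right h' hposC
      have hd0 : (0:ℝ) < ((b:ℝ)+2)*r := by positivity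
      have hexp : (((b:ℝ)+1)*r*(1 - (m:ℝ)*q/(((b:ℝ)+2)*r))) * (((b:ℝ)+2)*r)
          = ((b:ℝ)+1)*r*((((b:ℝ)+2)*r) - (m:ℝ)*q) := by
        field_simp
      have hq1 : ((b:ℝ)+1)*r*((((b:ℝ)+2)*r) - (m:ℝ)*q) ≤ q * (((b:ℝ)+2)*r) := by
        rw [← hexp]
        exact mul_le_mul_of_nonneg_right hfin hd0.le
      have hfin2 : (((b:ℝ)+1)*((b:ℝ)+2)*r) * r
          ≤ (((((b:ℝ)+2) + (m:ℝ)*((b:ℝ)+1)))*q) * r := by nlinarith [hq1]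
      exact le_of_mul_le_mul_right hfin2 hr0
    · have h2r : ((b:ℝ)+2)*r ≤ (m:ℝ)*q := by
        rw [le_div_iff₀ (by positivity)] at hphi
        linarith
      have hm0 : (0:ℝ) ≤ (m:ℝ) := Nat.cast_nonneg m
      have hb0 : (0:ℝ) ≤ (b:ℝ) := Nat.cast_nonneg b
      nlinarith [h2r, hq0.le, hm0, hb0]
  -- STEP 4 : (m+1)(m+2) q ≤ (m+2 + b(m+1)) r
  have step4 : ((m:ℝ)+1)*((m:ℝ)+2)*q ≤ (((m:ℝ)+2) + (b:ℝ)*((m:ℝ)+1))*r := by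
    have hRchain : (((k:ℝ) * ((k-1).choose m : ℝ)) * (r^m * q^b)) * q
        ≤ ((k.choose (m+1) : ℝ) * r^(m+1) * q^b) *
            ∑ j ∈ Finset.range (b+1), ((b:ℝ)*r/(((m:ℝ)+2)*q))^j := by
      calc (((k:ℝ) * ((k-1).choose m : ℝ)) * (r^m * q^b)) * q ≤ 1 * q :=
            mul_le_mul_of_nonneg_right hcon hq0.le
        _ = q := one_mul q
        _ = ∑ i ∈ Finset.Ico (m+1) (k+1), (k.choose i : ℝ) * r^i * q^(k-i) := H2.symm
        _ ≤ _ := sumR_le k m b hkb r q hr0 hq0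
    rcases lt_or_ge ((b:ℝ)*r/(((m:ℝ)+2)*q)) 1 with hphi | hphi
    · have hG1 : (∑ j ∈ Finset.range (b+1), ((b:ℝ)*r/(((m:ℝ)+2)*q))^j)
          * (1 - (b:ℝ)*r/(((m:ℝ)+2)*q)) ≤ 1 := by
        have hgm := geom_sum_mul ((b:ℝ)*r/(((m:ℝ)+2)*q)) (b+1)
        have hp : (0:ℝ) ≤ ((b:ℝ)*r/(((m:ℝ)+2)*q))^(b+1) := by positivity
        nlinarith [hgm]
      have h1phi : (0:ℝ) ≤ 1 - (b:ℝ)*r/(((m:ℝ)+2)*q) := by linarith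
      have hmul := mul_le_mul_of_nonneg_right hRchain h1phi
      have hCq : (0:ℝ) ≤ (k.choose (m+1) : ℝ) * r^(m+1) * q^b := by positivity
      have hmul2 : (((k:ℝ) * ((k-1).choose m : ℝ)) * (r^m * q^b)) * q
            * (1 - (b:ℝ)*r/(((m:ℝ)+2)*q))
          ≤ (k.choose (m+1) : ℝ) * r^(m+1) * q^b := by
        calc (((k:ℝ) * ((k-1).choose m : ℝ)) * (r^m * q^b)) * q
              * (1 - (b:ℝ)*r/(((m:ℝ)+2)*q))
            ≤ ((k.choose (m+1) : ℝ) * r^(m+1) * q^b) *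
                (∑ j ∈ Finset.range (b+1), ((b:ℝ)*r/(((m:ℝ)+2)*q))^j) *
                (1 - (b:ℝ)*r/(((m:ℝ)+2)*q)) := hmul
          _ = ((k.choose (m+1) : ℝ) * r^(m+1) * q^b) *
                ((∑ j ∈ Finset.range (b+1), ((b:ℝ)*r/(((m:ℝ)+2)*q))^j) *
                (1 - (b:ℝ)*r/(((m:ℝ)+2)*q))) := by ring
          _ ≤ ((k.choose (m+1) : ℝ) * r^(m+1) * q^b) * 1 :=
              mul_le_mul_of_nonneg_left hG1 hCq
          _ = (k.choose (m+1) : ℝ) * r^(m+1) * q^b := mul_one _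
      rw [pow_succ, hKA] at hmul2
      have hposC : (0:ℝ) < (k.choose (m+1) : ℝ) * (r^m * q^b) := by positivity
      have hfin : ((m:ℝ)+1)*q*(1 - (b:ℝ)*r/(((m:ℝ)+2)*q)) ≤ r := by
        have h' : (((m:ℝ)+1)*q*(1 - (b:ℝ)*r/(((m:ℝ)+2)*q))) * ((k.choose (m+1) : ℝ) * (r^m * q^b))
            ≤ r * ((k.choose (m+1) : ℝ) * (r^m * q^b)) := by
          calc (((m:ℝ)+1)*q*(1 - (b:ℝ)*r/(((m:ℝ)+2)*q))) * ((k.choose (m+1) : ℝ) * (r^m * q^b))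
              = ((m:ℝ)+1) * (k.choose (m+1) : ℝ) * (r^m * q^b) * q
                  * (1 - (b:ℝ)*r/(((m:ℝ)+2)*q)) := by ring
            _ ≤ (k.choose (m+1) : ℝ) * (r^m * r) * q^b := hmul2
            _ = r * ((k.choose (m+1) : ℝ) * (r^m * q^b)) := by ring
        exact le_of_mul_le_mul_right h' hposC
      have hd0 : (0:ℝ) < ((m:ℝ)+2)*q := by positivity
      have hexp : (((m:ℝ)+1)*q*(1 - (b:ℝ)*r/(((m:ℝ)+2)*q))) * (((m:ℝ)+2)*q)
          = ((m:ℝ)+1)*q*((((m:ℝ)+2)*q) - (b:ℝ)*r) := by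
        field_simp
      have hq1 : ((m:ℝ)+1)*q*((((m:ℝ)+2)*q) - (b:ℝ)*r) ≤ r * (((m:ℝ)+2)*q) := by
        rw [← hexp]
        exact mul_le_mul_of_nonneg_right hfin hd0.le
      have hfin2 : (((m:ℝ)+1)*((m:ℝ)+2)*q) * q
          ≤ (((((m:ℝ)+2) + (b:ℝ)*((m:ℝ)+1)))*r) * q := by nlinarith [hq1]
      exact le_of_mul_le_mul_right hfin2 hq0
    · have h2r : ((m:ℝ)+2)*q ≤ (b:ℝ)*r := by
        rw [le_div_iff₀ (by positivity)] at hphi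
        linarith
      have hm0 : (0:ℝ) ≤ (m:ℝ) := Nat.cast_nonneg m
      have hb0 : (0:ℝ) ≤ (b:ℝ) := Nat.cast_nonneg b
      nlinarith [h2r, hr0.le, hm0, hb0]
  -- final contradiction
  have hm0 : (0:ℝ) ≤ (m:ℝ) := Nat.cast_nonneg m
  have hb0 : (0:ℝ) ≤ (b:ℝ) := Nat.cast_nonneg b
  have hmb : (1:ℝ) ≤ (m:ℝ) + (b:ℝ) := by
    have : 1 ≤ m + b := by omega
    exact_mod_cast this
  have hprod := mul_le_mul step3 step4 (by positivity) (by positivity)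
  have hrq : (0:ℝ) < r * q := mul_pos hr0 hq0
  have hcoef : (((b:ℝ)+2) + (m:ℝ)*((b:ℝ)+1)) * (((m:ℝ)+2) + (b:ℝ)*((m:ℝ)+1)) + 1
      ≤ ((b:ℝ)+1)*((b:ℝ)+2)*(((m:ℝ)+1)*((m:ℝ)+2)) := by
    have h1 : (1:ℝ) ≤ ((m:ℝ)+1)*((b:ℝ)+1) := by nlinarith [hm0, hb0]
    have h2 : (1:ℝ)*2 ≤ (((m:ℝ)+1)*((b:ℝ)+1))*(((m:ℝ)+(b:ℝ))+1) :=
      mul_le_mul h1 (by linarith) (by linarith) (by linarith)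
    nlinarith [h2]
  have h6 : ((((b:ℝ)+2) + (m:ℝ)*((b:ℝ)+1)) * (((m:ℝ)+2) + (b:ℝ)*((m:ℝ)+1)) + 1) * (r*q)
      ≤ (((b:ℝ)+1)*((b:ℝ)+2)*(((m:ℝ)+1)*((m:ℝ)+2))) * (r*q) :=
    mul_le_mul_of_nonneg_right hcoef hrq.le
  nlinarith [hprod, h6, hrq]
end

section
/- Let a ∈ (0,1) with a ≠ 1/2 be rational, and define V_k = k·P(X_{k−1} = ⌊ka⌋) where X_{k−1} ~ Bin(k−1, 1/2), i.e., V_k = k·C(k−1, ⌊ka⌋)·2^{−(k−1)}. Then V_k → 0 as k → ∞. -/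
open Filter

private lemma choose_le_two_pow' (n k : ℕ) : n.choose k ≤ 2 ^ n := by
  rcases le_or_gt k n with h | h
  · calc n.choose k ≤ ∑ m ∈ Finset.range (n + 1), n.choose m :=
        Finset.single_le_sum (fun i _ => Nat.zero_le _)
          (Finset.mem_range.2 (Nat.lt_succ_of_le h))
    _ = 2 ^ n := Nat.sum_range_choose n
  · simp [Nat.choose_eq_zero_of_lt h]

private lemma lemA (n : ℕ) (ρ : ℝ) (hρ : 0 ≤ ρ) :
    ∀ d m : ℕ, m + d ≤ n →
    (∀ j, m ≤ j → j < m + d → (j + 1 : ℝ) ≤ ρ * ((n : ℝ) - j)) →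
    (n.choose m : ℝ) ≤ ρ ^ d * n.choose (m + d) := by
  intro d
  induction d with
  | zero => intro m _ _; simp
  | succ d ih =>
    intro m hmn hj
    have hmn' : m < n := by omega
    have hstep := hj m le_rfl (by omega)
    have hrec : (n.choose (m + 1) : ℝ) * (m + 1) = (n.choose m : ℝ) * ((n : ℝ) - m) := by
      have h := Nat.choose_succ_right_eq n m
      have hc : ((n - m : ℕ) : ℝ) = (n : ℝ) - m := by
        rw [Nat.cast_sub hmn'.le]
      calc (n.choose (m + 1) : ℝ) * (m + 1) = ((n.choose (m + 1) * (m + 1) : ℕ) : ℝ) := by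
            push_cast; ring
        _ = ((n.choose m * (n - m) : ℕ) : ℝ) := by rw [h]
        _ = (n.choose m : ℝ) * ((n : ℝ) - m) := by push_cast [hc]; ring
    have hnm : (0 : ℝ) < (n : ℝ) - m := by
      have : (m : ℝ) < n := by exact_mod_cast hmn'
      linarith
    have h1 : (n.choose m : ℝ) ≤ ρ * n.choose (m + 1) := by
      have hCm : (0 : ℝ) ≤ (n.choose m : ℝ) := by positivity
      have hCm1 : (0 : ℝ) ≤ (n.choose (m + 1) : ℝ) := by positivity
      nlinarith
    have h2 := ih (m + 1) (by omega) (fun j hj1 hj2 => hj j (by omega) (by omega))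
    have hrw : m + 1 + d = m + (d + 1) := by omega
    rw [hrw] at h2
    calc (n.choose m : ℝ) ≤ ρ * n.choose (m + 1) := h1
      _ ≤ ρ * (ρ ^ d * n.choose (m + (d + 1))) := by
          apply mul_le_mul_of_nonneg_left h2 hρ
      _ = ρ ^ (d + 1) * n.choose (m + (d + 1)) := by ring

private lemma lemB (b : ℝ) (hb0 : 0 < b) (hb : b < 1 / 2) (m : ℕ → ℕ)
    (hm : ∀ᶠ k in atTop, (m k : ℝ) ≤ b * k) :
    Tendsto (fun k : ℕ => (k : ℝ) * ((k - 1).choose (m k) : ℝ) / 2 ^ (k - 1))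
      atTop (nhds 0) := by
  set c : ℝ := b / 2 + 1 / 4 with hcdef
  clear_value c
  have hbc : b < c := by rw [hcdef]; linarith
  have hc2 : c < 1 / 2 := by rw [hcdef]; linarith
  have hc0 : 0 < c := by rw [hcdef]; linarith
  set ρ : ℝ := c / (1 - c) with hρdef
  clear_value ρ
  have h1c : 0 < 1 - c := by rw [hcdef]; linarith
  have hρ0 : 0 < ρ := by rw [hρdef]; exact div_pos hc0 h1c
  have hρ1 : ρ < 1 := by rw [hρdef]; exact (div_lt_one h1c).2 (by linarith)
  set δ : ℝ := (c - b) / 2 with hδdef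
  clear_value δ
  have hδ : 0 < δ := by rw [hδdef]; linarith
  set r : ℝ := ρ ^ δ with hrdef
  clear_value r
  have hr0 : 0 < r := by rw [hrdef]; exact Real.rpow_pos_of_pos hρ0 δ
  have hr1 : r < 1 := by rw [hrdef]; exact Real.rpow_lt_one hρ0.le hρ1 hδ
  have hg : Tendsto (fun k : ℕ => (k : ℝ) * r ^ k) atTop (nhds 0) := by
    simpa only [pow_one] using
      tendsto_pow_const_mul_const_pow_of_lt_one 1 hr0.le hr1
  apply squeeze_zero' (g := fun k : ℕ => (k : ℝ) * r ^ k) (g0 := hg)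
  · filter_upwards with k; positivity
  · have hN : ∀ᶠ k : ℕ in atTop, 2 * (c + 1) ≤ (c - b) * k := by
      have : Tendsto (fun k : ℕ => (c - b) * k) atTop atTop :=
        (tendsto_natCast_atTop_atTop (R := ℝ)).const_mul_atTop (by linarith)
      exact this.eventually_ge_atTop _
    filter_upwards [hm, hN, eventually_ge_atTop 2] with k hmk hkbig hk2
    set n := k - 1 with hndef
    clear_value n
    have hkn : (n : ℝ) = (k : ℝ) - 1 := by
      rw [hndef, Nat.cast_sub (by omega)]; simp
    have hkR : (2 : ℝ) ≤ (k : ℝ) := by exact_mod_cast hk2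
    set m' := ⌊c * (n : ℝ)⌋₊ with hm'def
    clear_value m'
    have hcn0 : (0 : ℝ) ≤ c * n := mul_nonneg hc0.le (Nat.cast_nonneg n)
    have hm'le : (m' : ℝ) ≤ c * n := by rw [hm'def]; exact Nat.floor_le hcn0
    have hm'gt : c * n - 1 < (m' : ℝ) := by
      rw [hm'def]
      have := Nat.lt_floor_add_one (c * (n : ℝ)); linarith
    have hmm' : m k ≤ m' := by
      rw [hm'def]
      apply Nat.le_floor
      have : b * k ≤ c * n := by rw [hkn]; nlinarith
      linarith
    have hm'n : m' ≤ n := by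
      rw [hm'def]
      have h1 : c * (n : ℝ) ≤ (n : ℝ) := by nlinarith [Nat.cast_nonneg (α := ℝ) n]
      calc ⌊c * (n : ℝ)⌋₊ ≤ ⌊(n : ℝ)⌋₊ := Nat.floor_mono h1
        _ = n := Nat.floor_natCast n
    have hratio : ∀ j, m k ≤ j → j < m k + (m' - m k) → (j + 1 : ℝ) ≤ ρ * ((n : ℝ) - j) := by
      intro j _ hj
      rw [Nat.add_sub_cancel' hmm'] at hj
      have hj1 : (j : ℝ) + 1 ≤ (m' : ℝ) := by exact_mod_cast hj
      have h1 : (j : ℝ) + 1 ≤ c * n := hj1.trans hm'le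
      have h2 : (1 - c) * n ≤ (n : ℝ) - j := by nlinarith
      calc (j : ℝ) + 1 ≤ c * n := h1
        _ = ρ * ((1 - c) * n) := by rw [hρdef]; field_simp
        _ ≤ ρ * ((n : ℝ) - j) := mul_le_mul_of_nonneg_left h2 hρ0.le
    have hA := lemA n ρ hρ0.le (m' - m k) (m k) (by omega) hratio
    rw [Nat.add_sub_cancel' hmm'] at hA
    have ht : δ * k ≤ ((m' - m k : ℕ) : ℝ) := by
      rw [Nat.cast_sub hmm']
      rw [hkn] at hm'gt
      rw [hδdef]
      linarith
    have hpow : ρ ^ (m' - m k) ≤ r ^ k := by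
      have h3 : r ^ k = ρ ^ (δ * k) := by
        rw [hrdef, ← Real.rpow_natCast (ρ ^ δ) k, ← Real.rpow_mul hρ0.le]
      rw [h3, ← Real.rpow_natCast ρ (m' - m k)]
      exact Real.rpow_le_rpow_of_exponent_ge hρ0 hρ1.le ht
    have hC2 : (n.choose m' : ℝ) ≤ 2 ^ n := by
      exact_mod_cast Nat.cast_le.2 (choose_le_two_pow' n m')
    have h2n : (0 : ℝ) < 2 ^ n := by positivity
    rw [div_le_iff₀ h2n]
    calc (k : ℝ) * (n.choose (m k) : ℝ)
        ≤ (k : ℝ) * (ρ ^ (m' - m k) * n.choose m') := by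
          apply mul_le_mul_of_nonneg_left hA (by positivity)
      _ ≤ (k : ℝ) * (r ^ k * 2 ^ n) := by
          apply mul_le_mul_of_nonneg_left _ (by positivity)
          apply mul_le_mul hpow hC2 (by positivity) (by positivity)
      _ = (k : ℝ) * r ^ k * 2 ^ n := by ring

/-- `V_k = k·C(k-1,⌊ka⌋)·2^{-(k-1)} → 0` for rational `a ∈ (0,1)`, `a ≠ 1/2`. -/
theorem central_binomial_floor_tendsto_zero
    (a : ℝ) (ha : a ∈ Set.Ioo (0:ℝ) 1) (hne : a ≠ 1 / 2) (hrat : ∃ q : ℚ, a = (q : ℝ)) :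
    Filter.Tendsto
      (fun k : ℕ => (k : ℝ) * ((k - 1).choose (Nat.floor ((k : ℝ) * a)) : ℝ) / 2 ^ (k - 1))
      Filter.atTop (nhds 0) := by
  obtain ⟨ha0, ha1⟩ := ha
  rcases lt_or_gt_of_ne hne with h | h
  · exact lemB a ha0 h (fun k => ⌊(k : ℝ) * a⌋₊)
      (Eventually.of_forall fun k => by
        calc (⌊(k : ℝ) * a⌋₊ : ℝ) ≤ (k : ℝ) * a := Nat.floor_le (by positivity)
          _ = a * k := mul_comm _ _)
  · have hfl : ∀ k : ℕ, 1 ≤ k → ⌊(k : ℝ) * a⌋₊ ≤ k - 1 := by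
      intro k hk
      have hk0 : (0 : ℝ) < k := by exact_mod_cast hk
      have : ⌊(k : ℝ) * a⌋₊ < k := by
        rw [Nat.floor_lt (by positivity)]
        nlinarith
      omega
    have hmain := lemB (1 - a) (by linarith) (by linarith)
      (fun k => (k - 1) - ⌊(k : ℝ) * a⌋₊) ?_
    · apply hmain.congr'
      filter_upwards [eventually_ge_atTop 1] with k hk
      rw [Nat.choose_symm (hfl k hk)]
    · filter_upwards [eventually_ge_atTop 1] with k hk
      have hfl' := hfl k hk
      have hk0 : (1 : ℝ) ≤ k := by exact_mod_cast hk
      have hlow : (k : ℝ) * a - 1 < (⌊(k : ℝ) * a⌋₊ : ℝ) := by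
        have := Nat.lt_floor_add_one ((k : ℝ) * a); linarith
      rw [Nat.cast_sub hfl', Nat.cast_sub (by omega)]
      push_cast
      nlinarith
end

section
/- Let X, Y be i.i.d. Bin(2,p) random variables. The function w_2(p) = P(2X − Y < 2) is strictly decreasing on [0,1] and has a unique fixed point p* ∈ (0.5, 0.68), and |w_2'(p*)| < 1. -/
/-- `w_2(p) = P(2X - Y < 2)` for `X, Y` i.i.d. `Bin(2,p)`. -/
noncomputable def wTwo (p : ℝ) : ℝ :=
  ∑ xy ∈ (Finset.range 3 ×ˢ Finset.range 3).filter (fun xy => 2 * xy.1 < 2 + xy.2),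
    ((Nat.choose 2 xy.1 : ℝ) * p ^ xy.1 * (1 - p) ^ (2 - xy.1)) *
      ((Nat.choose 2 xy.2 : ℝ) * p ^ xy.2 * (1 - p) ^ (2 - xy.2))

lemma wTwo_eq (p : ℝ) : wTwo p = 2*p^4 - 6*p^3 + 5*p^2 - 2*p + 1 := by
  unfold wTwo
  rw [Finset.sum_filter, Finset.sum_product]
  simp [Finset.sum_range_succ]
  ring

lemma wTwo_hasDeriv (x : ℝ) : HasDerivAt wTwo (8*x^3 - 18*x^2 + 10*x - 2) x := by
  have hfun : wTwo = fun p : ℝ => 2*p^4 - 6*p^3 + 5*p^2 - 2*p + 1 := funext wTwo_eq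
  rw [hfun]
  have h := (((((hasDerivAt_pow 4 x).const_mul 2).sub
      ((hasDerivAt_pow 3 x).const_mul 6)).add
      ((hasDerivAt_pow 2 x).const_mul 5)).sub
      ((hasDerivAt_id x).const_mul 2)).add_const 1
  refine h.congr_deriv ?_
  norm_num
  ring

lemma wTwo_deriv_neg {x : ℝ} (hx : 0 < x) (hx1 : x < 1) : 8*x^3 - 18*x^2 + 10*x - 2 < 0 := by
  nlinarith [sq_nonneg (2*x-1), sq_nonneg (3*x-1), mul_pos hx (sub_pos.2 hx1),
    mul_nonneg (mul_nonneg hx.le hx.le) (sub_pos.2 hx1).le, sq_nonneg x, sq_nonneg (x-1)]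

lemma wTwo_anti : StrictAntiOn wTwo (Set.Icc 0 1) := by
  apply StrictAntiOn.mono (s := Set.Icc (0:ℝ) 1)
  · exact strictAntiOn_of_deriv_neg (convex_Icc 0 1)
      (fun x _ => (wTwo_hasDeriv x).continuousAt.continuousWithinAt)
      (by
        intro x hx
        rw [interior_Icc] at hx
        rw [(wTwo_hasDeriv x).deriv]
        exact wTwo_deriv_neg hx.1 hx.2)
  · exact le_refl _

/-- `w_2` is strictly decreasing on [0,1], has a unique fixed point
`p* ∈ (0.5, 0.68)`, and `|w_2'(p*)| < 1`. -/
theorem wTwo_stable_fixed_point :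
    StrictAntiOn wTwo (Set.Icc 0 1) ∧
    ∃ r : ℝ, r ∈ Set.Ioo (0.5 : ℝ) 0.68 ∧ wTwo r = r ∧
      (∀ s ∈ Set.Icc (0:ℝ) 1, wTwo s = s → s = r) ∧
      |deriv wTwo r| < 1 := by
  refine ⟨wTwo_anti, ?_⟩
  set g : ℝ → ℝ := fun p => wTwo p - p with hg
  have hgc : Continuous g := by
    have : Continuous wTwo := by
      have hfun : wTwo = fun p : ℝ => 2*p^4 - 6*p^3 + 5*p^2 - 2*p + 1 := funext wTwo_eq
      rw [hfun]; continuity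
    exact this.sub continuous_id
  have hganti : StrictAntiOn g (Set.Icc 0 1) := by
    intro a ha b hb hab
    have := wTwo_anti ha hb hab
    simp only [hg]
    linarith
  have h05 : g 0.5 = 0.125 := by simp [hg, wTwo_eq]; norm_num
  have h068 : g 0.68 < 0 := by simp [hg, wTwo_eq]; norm_num
  have h06 : g 0.6 < 0 := by simp [hg, wTwo_eq]; norm_num
  -- IVT on [0.5, 0.68]
  have hsub : Set.Icc (g 0.68) (g 0.5) ⊆ g '' Set.Icc 0.5 0.68 :=
    intermediate_value_Icc' (by norm_num) hgc.continuousOn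
  have h0mem : (0:ℝ) ∈ Set.Icc (g 0.68) (g 0.5) := ⟨h068.le, by rw [h05]; norm_num⟩
  obtain ⟨r, hrmem, hr0⟩ := hsub h0mem
  have hr01 : r ∈ Set.Icc (0:ℝ) 1 := ⟨by linarith [hrmem.1], by linarith [hrmem.2]⟩
  have hrIoo : r ∈ Set.Ioo (0.5:ℝ) 0.68 := by
    constructor
    · rcases lt_or_eq_of_le hrmem.1 with h | h
      · exact h
      · exfalso; rw [← h, h05] at hr0; norm_num at hr0
    · rcases lt_or_eq_of_le hrmem.2 with h | h
      · exact h
      · exfalso; rw [h] at hr0; linarith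
  have hrfix : wTwo r = r := by simp only [hg] at hr0; linarith
  have hr06 : r < 0.6 := by
    by_contra h
    push_neg at h
    rcases lt_or_eq_of_le h with h' | h'
    · have := hganti (by norm_num : (0.6:ℝ) ∈ Set.Icc (0:ℝ) 1) hr01 h'
      rw [hr0] at this; linarith
    · rw [← h'] at hr0; linarith
  refine ⟨r, hrIoo, hrfix, ?_, ?_⟩
  · intro s hs hsfix
    by_contra hne
    rcases lt_or_gt_of_ne hne with h | h
    · have := hganti hs hr01 h
      simp only [hg, hsfix, hrfix, sub_self] at this; linarith
    · have := hganti hr01 hs h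
      simp only [hg, hsfix, hrfix, sub_self] at this; linarith
  · rw [(wTwo_hasDeriv r).deriv, abs_lt]
    have h1 : (0.5:ℝ) < r := hrIoo.1
    constructor
    · nlinarith [sq_nonneg (r - 0.5), sq_nonneg r, mul_pos (sub_pos.2 h1) (sub_pos.2 hr06)]
    · nlinarith [wTwo_deriv_neg (by linarith : (0:ℝ) < r) (by linarith : r < 1)]
end
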